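/- For every prime p and every integer m ≥ 1, write c_i for the coefficient of y^i in σ_{m−1}(y). Then p divides c_i for all i < δ(p,m), and p does not divide c_{δ(p,m)}; that is, δ(p,m) is the least index i such that p ∤ c_i. (This is the arithmetic content of Proposition 7.5 of the paper: the condition 'p ∤ c_ℓ and p | c_i for all i < ℓ' holds if and only if ℓ = δ(p,m).) -/

import Mathlib

open Polynomial

/-- The Chebyshev-like polynomials: `symPoly 0 = 1`, `symPoly 1 = X`,
`symPoly (k+2) = X * symPoly (k+1) - symPoly k`. -/
noncomputable def symPoly : ℕ → ℤ[X]
  | 0 => 1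
  | 1 => X
  | (k+2) => X * symPoly (k+1) - symPoly k

/-- `σ_{m-1}(y) = Sym_{m-1}(y+2)`. -/
noncomputable def sigmaPoly (m : ℕ) : ℤ[X] := (symPoly (m-1)).comp (X + 2)

/-- `δ(p,m)`: with `i` the `p`-adic valuation of `m`, this is `2^i - 1` for `p = 2`
and `(p^i - 1)/2` for odd `p`. -/
def deltaPM (p m : ℕ) : ℕ :=
  if p = 2 then 2 ^ (m.factorization p) - 1 else (p ^ (m.factorization p) - 1) / 2

section Aux

open Nat Finset

lemma carry_dvd {p n k : ℕ} (hp : p.Prime) (hkn : k ≤ n) (j : ℕ) (hj : 1 ≤ j)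
    (hc : p ^ j ≤ k % p ^ j + (n - k) % p ^ j) : p ∣ n.choose k := by
  refine dvd_iff_emultiplicity_pos.mp ?_
  rw [Nat.Prime.emultiplicity_choose hp hkn
    (b := max (Nat.log p n + 1) (j + 1)) (by omega)]
  have hmem : j ∈ {i ∈ Ico 1 (max (Nat.log p n + 1) (j + 1)) |
      p ^ i ≤ k % p ^ i + (n - k) % p ^ i} :=
    Finset.mem_filter.mpr ⟨Finset.mem_Ico.mpr ⟨hj, by omega⟩, hc⟩
  exact_mod_cast Nat.pos_of_ne_zero fun h0 => by
    exact (Finset.card_pos.mpr ⟨j, hmem⟩).ne' h0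

lemma no_carry_not_dvd {p n k : ℕ} (hp : p.Prime) (hkn : k ≤ n)
    (hc : ∀ j, 1 ≤ j → k % p ^ j + (n - k) % p ^ j < p ^ j) : ¬ p ∣ n.choose k := by
  refine emultiplicity_eq_zero.mp ?_
  rw [Nat.Prime.emultiplicity_choose hp hkn (b := Nat.log p n + 1) (by omega)]
  norm_cast
  rw [Finset.card_eq_zero]
  refine Finset.filter_eq_empty_iff.mpr fun i hi => ?_
  exact not_le.mpr (hc i (Finset.mem_Ico.mp hi).1)

lemma mod_helper (a b c : ℕ) (h : c < a) : (a * b + c) % a = c := by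
  rw [Nat.mul_add_mod, Nat.mod_eq_of_lt h]

/-- `p = 2`, divisibility part. -/
lemma two_dvd {v M i : ℕ} (hM1 : 1 ≤ M) (hi : i < 2^v - 1) :
    2 ∣ (2^v * M + i).choose (2*i+1) := by
  have hT1 : (1:ℕ) ≤ 2^((i+1).factorization 2) := Nat.one_le_two_pow
  set t := (i+1).factorization 2 with htdef
  have hc2 : ¬ 2 ∣ (i+1) / 2^t := Nat.not_dvd_ordCompl Nat.prime_two (by omega)
  obtain ⟨c, hc⟩ : (2:ℕ)^t ∣ i + 1 := Nat.ordProj_dvd _ _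
  have hcval : (i+1)/2^t = c := by
    rw [hc, Nat.mul_div_cancel_left _ (by positivity)]
  rw [hcval] at hc2
  obtain ⟨c₂, hcc⟩ : ∃ c₂, c = 2*c₂ + 1 := ⟨c/2, by omega⟩
  have hTle : 2^t ≤ i + 1 := Nat.le_of_dvd (by omega) ⟨c, hc⟩
  have htv : t + 1 ≤ v := by
    have h1 : (2:ℕ)^t < 2^v := by omega
    have := (Nat.pow_lt_pow_iff_right (one_lt_two)).mp h1
    omega
  obtain ⟨q', hq'⟩ : ∃ q', (2:ℕ)^v = 2^(t+1) * q' :=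
    ⟨2^(v-(t+1)), by rw [← pow_add]; congr 1; omega⟩
  have hkn : 2*i+1 ≤ 2^v*M + i := by
    have : (2:ℕ)^v * 1 ≤ 2^v * M := Nat.mul_le_mul_left _ hM1
    omega
  have e1 : (2:ℕ)^(t+1) = 2 * 2^t := by rw [pow_succ]; ring
  have hi1 : i + 1 = 2^(t+1)*c₂ + 2^t := by
    rw [hc, hcc, pow_succ]; ring
  apply carry_dvd Nat.prime_two hkn (t+1) (by omega)
  have hk : 2*i+1 = 2^(t+1) * (2*c₂) + (2^(t+1) - 1) := by
    have hb : 2^(t+1)*(2*c₂) = 2*(2^(t+1)*c₂) := by ring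
    omega
  have hmod1 : (2*i+1) % 2^(t+1) = 2^(t+1) - 1 := by
    rw [hk, mod_helper _ _ _ (by omega)]
  have h2 : c₂ + 1 ≤ q'*M := by
    have hb1 : (2:ℕ)^t * c ≤ 2^t * (2*(q'*M)) := by
      have hbig : (2:ℕ)^v * M = 2^t * (2*(q'*M)) := by rw [hq']; ring
      omega
    have := Nat.le_of_mul_le_mul_left hb1 (by positivity)
    omega
  obtain ⟨e, he⟩ : ∃ e, q'*M = e + c₂ + 1 := ⟨q'*M - c₂ - 1, by omega⟩
  have hbig : 2^v*M = 2^(t+1)*e + 2^(t+1)*c₂ + 2^(t+1) := by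
    rw [hq', show (2:ℕ)^(t+1)*q'*M = 2^(t+1)*(q'*M) by ring, he]; ring
  have key : 2^v*M + i - (2*i+1) = 2^(t+1) * e + 2^t := by omega
  have hmod2 : (2^v*M + i - (2*i+1)) % 2^(t+1) = 2^t := by
    rw [key, mod_helper _ _ _ (by omega)]
  rw [hmod1, hmod2]
  omega

/-- `p = 2`, non-divisibility part. -/
lemma two_not_dvd {v M : ℕ} (hM : ¬ 2 ∣ M) (hM1 : 1 ≤ M) :
    ¬ 2 ∣ (2^v*M + (2^v - 1)).choose (2*(2^v-1)+1) := by
  have hq1 : (1:ℕ) ≤ 2^v := Nat.one_le_two_pow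
  obtain ⟨M₂, hM2⟩ : ∃ M₂, M = 2*M₂+1 := ⟨M/2, by omega⟩
  have hQM : (2:ℕ)^v ≤ 2^v*M := by
    have : (2:ℕ)^v * 1 ≤ 2^v * M := Nat.mul_le_mul_left _ hM1
    omega
  have hbig : 2^v*M = 2*2^v*M₂ + 2^v := by rw [hM2]; ring
  have hkn : 2*(2^v-1)+1 ≤ 2^v*M + (2^v - 1) := by omega
  have h2q : 2*2^v = 2^(v+1) := by rw [pow_succ]; ring
  have hnk : 2^v*M + (2^v-1) - (2*(2^v-1)+1) = 2*2^v*M₂ := by omega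
  apply no_carry_not_dvd Nat.prime_two hkn
  intro j hj
  have hj1 : (1:ℕ) ≤ 2^j := Nat.one_le_two_pow
  rw [hnk]
  by_cases hjv : j ≤ v + 1
  · obtain ⟨w, hw⟩ : (2:ℕ)^j ∣ 2^(v+1) := pow_dvd_pow 2 hjv
    have hw1 : 1 ≤ w := by
      rcases Nat.eq_zero_or_pos w with h | h
      · rw [h, mul_zero] at hw; have : (1:ℕ) ≤ 2^(v+1) := Nat.one_le_two_pow; omega
      · exact h
    obtain ⟨w', hw'⟩ : ∃ w', w = w' + 1 := ⟨w - 1, by omega⟩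
    have hb : (2:ℕ)^j*(w'+1) = 2^j*w' + 2^j := by ring
    have hk : 2*(2^v-1)+1 = 2^j*w' + (2^j - 1) := by
      rw [hw'] at hw; omega
    have hmod1 : (2*(2^v-1)+1) % 2^j = 2^j - 1 := by
      rw [hk, mod_helper _ _ _ (by omega)]
    have hd : (2:ℕ)^j ∣ 2*2^v*M₂ :=
      ⟨w*M₂, by rw [show (2:ℕ)*2^v*M₂ = (2*2^v)*M₂ by ring, h2q, hw]; ring⟩
    have hmod2 : (2*2^v*M₂) % 2^j = 0 := by
      rcases hd with ⟨u, hu⟩; rw [hu, Nat.mul_mod_right]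
    rw [hmod1, hmod2]
    omega
  · obtain ⟨d, hd, hd1⟩ : ∃ d, j = v+1+d ∧ 1 ≤ d := ⟨j - (v+1), by omega, by omega⟩
    have hd2 : (1:ℕ) ≤ 2^d := Nat.one_le_two_pow
    have h2j : (2:ℕ)^j = 2*2^v*2^d := by rw [hd, pow_add, ← h2q]
    have hmod1 : (2*(2^v-1)+1) % 2^j = 2*2^v - 1 := by
      rw [show 2*(2^v-1)+1 = 2*2^v-1 by omega]
      apply Nat.mod_eq_of_lt
      have : 2*2^v*1 ≤ 2*2^v*2^d := Nat.mul_le_mul_left _ hd2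
      omega
    have hmod2 : (2*2^v*M₂) % 2^j = 2*2^v*(M₂ % 2^d) := by
      rw [h2j, Nat.mul_mod_mul_left]
    have hlt : M₂ % 2^d < 2^d := Nat.mod_lt _ (by omega)
    have hb : 2*2^v*(M₂ % 2^d) + 2*2^v ≤ 2*2^v*2^d := by
      have h := Nat.mul_le_mul_left (2*2^v) (show M₂ % 2^d + 1 ≤ 2^d by omega)
      have : 2*2^v*(M₂ % 2^d + 1) = 2*2^v*(M₂ % 2^d) + 2*2^v := by ring
      omega
    rw [hmod1, hmod2]
    omega

/-- odd `p`, divisibility part. -/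
lemma odd_dvd {p v M i : ℕ} (hp : p.Prime) (hp2 : p ≠ 2) (hM1 : 1 ≤ M)
    (hi : i < (p^v - 1)/2) : p ∣ (p^v*M + i).choose (2*i+1) := by
  have hqodd : p^v % 2 = 1 := Nat.odd_iff.mp ((hp.odd_of_ne_two hp2).pow)
  have hq1 : (1:ℕ) ≤ p^v := Nat.one_le_pow _ _ hp.pos
  have hv : 1 ≤ v := by
    rcases Nat.eq_zero_or_pos v with hv | hv
    · rw [hv, pow_zero] at hi; omega
    · exact hv
  obtain ⟨M', hM'⟩ : ∃ M', M = M' + 1 := ⟨M - 1, by omega⟩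
  have hbig : p^v*M = p^v*M' + p^v := by rw [hM']; ring
  have hkn : 2*i+1 ≤ p^v*M + i := by omega
  apply carry_dvd hp hkn v hv
  have hmod1 : (2*i+1) % p^v = 2*i+1 := Nat.mod_eq_of_lt (by omega)
  have hnk : p^v*M + i - (2*i+1) = p^v*M' + (p^v - (i+1)) := by omega
  have hmod2 : (p^v*M' + (p^v - (i+1))) % p^v = p^v - (i+1) :=
    mod_helper _ _ _ (by omega)
  rw [hmod1, hnk, hmod2]
  omega

/-- odd `p`, non-divisibility part. -/
lemma odd_not_dvd {p v M : ℕ} (hp : p.Prime) (hp2 : p ≠ 2) (hM : ¬ p ∣ M) (hM1 : 1 ≤ M) :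
    ¬ p ∣ (p^v*M + (p^v-1)/2).choose (2*((p^v-1)/2)+1) := by
  have hqodd : p^v % 2 = 1 := Nat.odd_iff.mp ((hp.odd_of_ne_two hp2).pow)
  have hq1 : (1:ℕ) ≤ p^v := Nat.one_le_pow _ _ hp.pos
  have hk : 2*((p^v-1)/2)+1 = p^v := by omega
  rw [hk]
  obtain ⟨M', hM'⟩ : ∃ M', M = M' + 1 := ⟨M - 1, by omega⟩
  have hbig : p^v*M = p^v*M' + p^v := by rw [hM']; ring
  have hkn : p^v ≤ p^v*M + (p^v-1)/2 := by omega
  have hnk : p^v*M + (p^v-1)/2 - p^v = p^v*M' + (p^v-1)/2 := by omega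
  apply no_carry_not_dvd hp hkn
  intro j hj
  have hpj1 : (1:ℕ) ≤ p^j := Nat.one_le_pow _ _ hp.pos
  rw [hnk]
  by_cases hjv : j ≤ v
  · obtain ⟨w, hw⟩ : (p:ℕ)^j ∣ p^v := pow_dvd_pow p hjv
    have hmod1 : p^v % p^j = 0 := by rw [hw, Nat.mul_mod_right]
    have hmod2 : (p^v*M' + (p^v-1)/2) % p^j < p^j := Nat.mod_lt _ (by omega)
    omega
  · obtain ⟨d, hd, hd1⟩ : ∃ d, j = v + d ∧ 1 ≤ d := ⟨j - v, by omega, by omega⟩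
    have hpd : 2 ≤ p^d := by
      have h1 : p ≤ p^d := Nat.le_self_pow (by omega) p
      have := hp.two_le
      omega
    have hpj : (p:ℕ)^j = p^v*p^d := by rw [hd, pow_add]
    have hmul : p^v*2 ≤ p^v*p^d := Nat.mul_le_mul_left _ hpd
    have hmod1 : p^v % p^j = p^v := Nat.mod_eq_of_lt (by omega)
    have hdm := Nat.div_add_mod M' (p^d)
    have hrlt : M' % p^d < p^d := Nat.mod_lt _ (by omega)
    have hr2 : M' % p^d + 2 ≤ p^d := by
      rcases Nat.lt_or_ge (M' % p^d + 2) (p^d + 1) with h | h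
      · omega
      · exfalso
        apply hM
        have hMeq : M = p^d*(M'/p^d) + p^d := by omega
        have : p^d ∣ M := ⟨M'/p^d + 1, by rw [hMeq]; ring⟩
        exact dvd_trans (dvd_pow_self p (by omega)) this
    have hbound := Nat.mul_le_mul_left (p^v) hr2
    have hbr : p^v * (M' % p^d + 2) = p^v*(M' % p^d) + p^v*2 := by ring
    have hmod2 : (p^v*M' + (p^v-1)/2) % p^j = p^v*(M' % p^d) + (p^v-1)/2 := by
      rw [hpj, Nat.add_mod, Nat.mul_mod_mul_left,
        Nat.mod_eq_of_lt (show (p^v-1)/2 < p^v*p^d by omega),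
        Nat.mod_eq_of_lt (show p^v*(M' % p^d) + (p^v-1)/2 < p^v*p^d by omega)]
    rw [hmod1, hmod2]
    omega

lemma pascal4 (k i : ℕ) :
    (k+4+i).choose (2*i+3) + (k+2+i).choose (2*i+3)
      = (k+2+i).choose (2*i+1) + 2 * (k+3+i).choose (2*i+3) := by
  have h1 : (k+4+i).choose (2*i+3) = (k+3+i).choose (2*i+2) + (k+3+i).choose (2*i+3) := by
    rw [show k+4+i = (k+3+i)+1 by ring, show 2*i+3 = (2*i+2)+1 by ring, Nat.choose_succ_succ]
  have h2 : (k+3+i).choose (2*i+2) = (k+2+i).choose (2*i+1) + (k+2+i).choose (2*i+2) := by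
    rw [show k+3+i = (k+2+i)+1 by ring, show 2*i+2 = (2*i+1)+1 by ring, Nat.choose_succ_succ]
  have h3 : (k+3+i).choose (2*i+3) = (k+2+i).choose (2*i+2) + (k+2+i).choose (2*i+3) := by
    rw [show k+3+i = (k+2+i)+1 by ring, show 2*i+3 = (2*i+2)+1 by ring, Nat.choose_succ_succ]
  omega

lemma coeff_two_mul (f : ℤ[X]) (n : ℕ) : ((2 : ℤ[X]) * f).coeff n = 2 * f.coeff n := by
  rw [show (2:ℤ[X]) = C 2 by norm_num, coeff_C_mul]

lemma symPoly_comp_coeff : ∀ k i, ((symPoly k).comp (X + 2)).coeff i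
    = ((k + 1 + i).choose (2*i+1) : ℤ)
  | 0, i => by
    rcases i with _ | i
    · simp [symPoly]
    · simp [symPoly, Nat.choose_eq_zero_of_lt (by omega : 1 + (i+1) < 2*(i+1)+1),
        Polynomial.coeff_one]
  | 1, i => by
    match i with
    | 0 => simp [symPoly]
    | 1 => simp [symPoly]
    | (i+2) =>
      simp [symPoly, Nat.choose_eq_zero_of_lt (by omega : 1 + 1 + (i+2) < 2*(i+2)+1),
        coeff_X, Polynomial.coeff_one]
  | (k+2), i => by
    have ih1 := symPoly_comp_coeff (k+1)
    have ih0 := symPoly_comp_coeff k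
    have hc : (symPoly (k+2)).comp (X + 2)
        = X * (symPoly (k+1)).comp (X + 2) + 2 * (symPoly (k+1)).comp (X + 2)
          - (symPoly k).comp (X + 2) := by
      rw [symPoly]; simp [sub_comp, mul_comp]; ring
    rw [hc]
    rcases i with _ | i
    · rw [coeff_sub, coeff_add, mul_coeff_zero, coeff_X_zero, zero_mul,
        coeff_two_mul, ih1 0, ih0 0]
      simp [Nat.choose_one_right]
      ring
    · rw [coeff_sub, coeff_add, coeff_X_mul, coeff_two_mul, ih1 i, ih1 (i+1), ih0 (i+1)]
      rw [show k+1+1+i = k+2+i by ring, show k+1+1+(i+1) = k+3+i by ring,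
        show k+1+(i+1) = k+2+i by ring, show k+2+1+(i+1) = k+4+i by ring,
        show 2*(i+1)+1 = 2*i+3 by ring]
      have p4 := pascal4 k i
      omega

end Aux

/-- Arithmetic content of Proposition 7.5: `δ(p,m)` is the least index `i` such that `p`
does not divide the coefficient `c_i` of `y^i` in `σ_{m-1}(y)`. -/
theorem stmt5 (p m : ℕ) (hp : p.Prime) (hm : 1 ≤ m) :
    (∀ i < deltaPM p m, (p : ℤ) ∣ (sigmaPoly m).coeff i) ∧
      ¬ (p : ℤ) ∣ (sigmaPoly m).coeff (deltaPM p m) := by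
  have hm0 : m ≠ 0 := by omega
  have hcoeff : ∀ i, (sigmaPoly m).coeff i = ((m + i).choose (2*i+1) : ℤ) := by
    intro i
    unfold sigmaPoly
    rw [symPoly_comp_coeff, show m - 1 + 1 + i = m + i by omega]
  obtain ⟨v, hv⟩ : ∃ v, m.factorization p = v := ⟨_, rfl⟩
  have hmf : p ^ v * (m / p ^ v) = m := by
    rw [← hv]; exact Nat.ordProj_mul_ordCompl_eq_self m p
  have hM : ¬ p ∣ m / p ^ v := by rw [← hv]; exact Nat.not_dvd_ordCompl hp hm0
  have hM1 : 1 ≤ m / p ^ v := by rw [← hv]; exact Nat.ordCompl_pos p hm0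
  constructor
  · intro i hi
    rw [hcoeff i, Int.natCast_dvd_natCast]
    by_cases hp2 : p = 2
    · subst hp2
      rw [deltaPM, if_pos rfl, hv] at hi
      rw [← hmf]
      exact two_dvd hM1 hi
    · rw [deltaPM, if_neg hp2, hv] at hi
      rw [← hmf]
      exact odd_dvd hp hp2 hM1 hi
  · rw [hcoeff, Int.natCast_dvd_natCast]
    by_cases hp2 : p = 2
    · subst hp2
      rw [deltaPM, if_pos rfl, hv, ← hmf]
      exact two_not_dvd hM hM1
    · rw [deltaPM, if_neg hp2, hv, ← hmf]
      exact odd_not_dvd hp hp2 hM hM1
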